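/- arXiv:2302.08160 — 7 statements merged into one kernel-verified Lean document; each statement's English description precedes it below -/
import Mathlib

section
/- A feature i ∈ F is relevant for the explanation problem given by (κ, v) if and only if the variable s_i is essential for the sufficiency function σ, i.e., i belongs to some AXp if and only if there exist s, s' ∈ {0,1}^m differing only in coordinate i with σ(s) ≠ σ(s'). -/
/-- The set of points agreeing with `v` on all features in `S`. -/
def upsilon {m : ℕ} (v : Fin m → Bool) (S : Finset (Fin m)) : Set (Fin m → Bool) :=
  {x | ∀ i ∈ S, x i = v i}

/-- Weak abductive explanation: fixing the features in `S` to their values in `v`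
forces the prediction to remain `κ v`. -/
def WAXp {m : ℕ} (κ : (Fin m → Bool) → Bool) (v : Fin m → Bool) (S : Finset (Fin m)) : Prop :=
  ∀ x ∈ upsilon v S, κ x = κ v

/-- Abductive explanation: a subset-minimal weak AXp. -/
def AXp {m : ℕ} (κ : (Fin m → Bool) → Bool) (v : Fin m → Bool) (S : Finset (Fin m)) : Prop :=
  WAXp κ v S ∧ ∀ T ⊂ S, ¬ WAXp κ v T

/-- Weak contrastive explanation: freeing the features in `S` (fixing all others
to their values in `v`) allows the prediction to change. -/
def WCXp {m : ℕ} (κ : (Fin m → Bool) → Bool) (v : Fin m → Bool) (S : Finset (Fin m)) : Prop :=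
  ∃ x : Fin m → Bool, (∀ i ∉ S, x i = v i) ∧ κ x ≠ κ v

/-- Contrastive explanation: a subset-minimal weak CXp. -/
def CXp {m : ℕ} (κ : (Fin m → Bool) → Bool) (v : Fin m → Bool) (S : Finset (Fin m)) : Prop :=
  WCXp κ v S ∧ ∀ T ⊂ S, ¬ WCXp κ v T

/-- A feature is relevant if it belongs to some AXp. -/
def Relevant {m : ℕ} (κ : (Fin m → Bool) → Bool) (v : Fin m → Bool) (i : Fin m) : Prop :=
  ∃ S, AXp κ v S ∧ i ∈ S

/-- The sufficiency function `σ`: `σ s = true` iff fixing exactly the features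
selected by `s` to their values in `v` forces the prediction `κ v` everywhere. -/
def sigmaFn {m : ℕ} (κ : (Fin m → Bool) → Bool) (v : Fin m → Bool) (s : Fin m → Bool) : Bool :=
  decide (∀ x : Fin m → Bool, (∀ i : Fin m, s i = true → x i = v i) → κ x = κ v)

/-- Average value of the classifier over the points agreeing with `v` on `S`. -/
def phi {m : ℕ} (κ : (Fin m → Bool) → Bool) (v : Fin m → Bool) (S : Finset (Fin m)) : ℚ :=
  (1 / 2 ^ (m - S.card)) *
    ∑ x ∈ Finset.univ.filter (fun x : Fin m → Bool => ∀ i ∈ S, x i = v i),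
      (if κ x = true then (1 : ℚ) else 0)

/-- The Shapley value of feature `i` for the instance `(v, κ v)`. -/
def Sv {m : ℕ} (κ : (Fin m → Bool) → Bool) (v : Fin m → Bool) (i : Fin m) : ℚ :=
  ∑ S ∈ (Finset.univ.erase i).powerset,
    ((S.card.factorial : ℚ) * ((m - S.card - 1).factorial : ℚ) / (m.factorial : ℚ)) *
      (phi κ v (insert i S) - phi κ v S)

lemma waxp_mono {m : ℕ} {κ : (Fin m → Bool) → Bool} {v : Fin m → Bool}
    {S T : Finset (Fin m)} (hST : S ⊆ T) (h : WAXp κ v S) : WAXp κ v T :=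
  fun x hx => h x (fun i hi => hx i (hST hi))

lemma exists_axp_subset {m : ℕ} (κ : (Fin m → Bool) → Bool) (v : Fin m → Bool) :
    ∀ S : Finset (Fin m), WAXp κ v S → ∃ T, T ⊆ S ∧ AXp κ v T := by
  intro S
  induction S using Finset.strongInduction with
  | _ S ih =>
    intro h
    by_cases hmin : ∀ T ⊂ S, ¬ WAXp κ v T
    · exact ⟨S, subset_rfl, h, hmin⟩
    · push_neg at hmin
      obtain ⟨T, hT, hW⟩ := hmin
      obtain ⟨U, hU, hA⟩ := ih T hT hW
      exact ⟨U, hU.trans hT.subset, hA⟩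

lemma sigma_true_iff {m : ℕ} (κ : (Fin m → Bool) → Bool) (v : Fin m → Bool)
    (s : Fin m → Bool) :
    sigmaFn κ v s = true ↔
      WAXp κ v (Finset.univ.filter (fun j => s j = true)) := by
  simp [sigmaFn, WAXp, upsilon]

lemma relevant_of_waxp_erase {m : ℕ} {κ : (Fin m → Bool) → Bool} {v : Fin m → Bool}
    {i : Fin m} {S : Finset (Fin m)} (hW : WAXp κ v S) (hE : ¬ WAXp κ v (S.erase i)) :
    Relevant κ v i := by
  obtain ⟨T, hTS, hA⟩ := exists_axp_subset κ v S hW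
  refine ⟨T, hA, ?_⟩
  by_contra hi
  exact hE (waxp_mono (fun j hj => Finset.mem_erase.mpr ⟨fun h => hi (h ▸ hj), hTS hj⟩) hA.1)

lemma relevant_of_sigma {m : ℕ} {κ : (Fin m → Bool) → Bool} {v : Fin m → Bool}
    {i : Fin m} {s s' : Fin m → Bool} (hagree : ∀ j : Fin m, j ≠ i → s j = s' j)
    (hs : sigmaFn κ v s = true) (hs' : sigmaFn κ v s' = false) :
    Relevant κ v i := by
  set S := Finset.univ.filter (fun j => s j = true) with hS
  set S' := Finset.univ.filter (fun j => s' j = true) with hS'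
  have hW : WAXp κ v S := (sigma_true_iff κ v s).mp hs
  have hW' : ¬ WAXp κ v S' := fun h => by
    rw [← sigma_true_iff] at h; rw [h] at hs'; exact absurd hs' (by simp)
  have hsi : s i = true := by
    by_contra h
    apply hW'
    refine waxp_mono (fun j hj => ?_) hW
    simp only [hS, hS', Finset.mem_filter, Finset.mem_univ, true_and] at hj ⊢
    by_cases hji : j = i
    · exact absurd (hji ▸ hj) h
    · rw [← hagree j hji]; exact hj
  have herase : S' = S.erase i := by
    ext j
    simp only [hS, hS', Finset.mem_filter, Finset.mem_erase, Finset.mem_univ, true_and]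
    by_cases hji : j = i
    · subst hji
      have hfalse : s' j ≠ true := by
        intro h
        apply hW'
        refine waxp_mono (fun k hk => ?_) hW
        simp only [hS, hS', Finset.mem_filter, Finset.mem_univ, true_and] at hk ⊢
        by_cases hki : k = j
        · subst hki; exact h
        · rw [← hagree k hki]; exact hk
      simp [hfalse]
    · rw [← hagree j hji]; simp [hji]
  exact relevant_of_waxp_erase hW (herase ▸ hW')

theorem stmt5 {m : ℕ} (hm : 1 ≤ m) (κ : (Fin m → Bool) → Bool) (v : Fin m → Bool)
    (i : Fin m) :
    Relevant κ v i ↔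
      ∃ s s' : Fin m → Bool, (∀ j : Fin m, j ≠ i → s j = s' j) ∧
        sigmaFn κ v s ≠ sigmaFn κ v s' := by
  constructor
  · rintro ⟨S, ⟨hW, hmin⟩, hi⟩
    refine ⟨fun j => decide (j ∈ S), fun j => decide (j ∈ S.erase i), ?_, ?_⟩
    · intro j hj
      simp [Finset.mem_erase, hj]
    · have h1 : sigmaFn κ v (fun j => decide (j ∈ S)) = true := by
        rw [sigma_true_iff]
        convert hW using 2
        ext j; simp
      have h2 : sigmaFn κ v (fun j => decide (j ∈ S.erase i)) = false := by
        rw [Bool.eq_false_iff]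
        intro h
        rw [sigma_true_iff] at h
        refine hmin (S.erase i) (Finset.erase_ssubset hi) ?_
        convert h using 2
        ext j; simp
      rw [h1, h2]; simp
  · rintro ⟨s, s', hagree, hne⟩
    cases h : sigmaFn κ v s with
    | false =>
      have h' : sigmaFn κ v s' = true := by
        cases h2 : sigmaFn κ v s'
        · exact absurd (h.trans h2.symm) hne
        · rfl
      exact relevant_of_sigma (fun j hj => (hagree j hj).symm) h' h
    | true =>
      have h' : sigmaFn κ v s' = false := by
        cases h2 : sigmaFn κ v s'
        · rfl
        · exact absurd (h.trans h2.symm) hne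
      exact relevant_of_sigma hagree h h'
end

section
/- Minimal hitting set duality between abductive and contrastive explanations: a set X ⊆ F is an AXp if and only if X is a subset-minimal set that intersects every CXp; dually, a set Y ⊆ F is a CXp if and only if Y is a subset-minimal set that intersects every AXp. -/
lemma exists_min_subset {α : Type*} [DecidableEq α] (P : Finset α → Prop) :
    ∀ S : Finset α, P S → ∃ T ⊆ S, P T ∧ ∀ T' ⊂ T, ¬ P T' := by
  classical
  intro S
  induction S using Finset.strongInductionOn with
  | _ S ih =>
    intro hS
    by_cases h : ∃ T ⊂ S, P T
    · obtain ⟨T, hTS, hT⟩ := h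
      obtain ⟨U, hUT, hU⟩ := ih T hTS hT
      exact ⟨U, hUT.trans hTS.subset, hU⟩
    · exact ⟨S, subset_rfl, hS, fun T' hT' hP => h ⟨T', hT', hP⟩⟩

lemma waxp_iff_hits_wcxp {m : ℕ} (κ : (Fin m → Bool) → Bool) (v : Fin m → Bool)
    (X : Finset (Fin m)) :
    WAXp κ v X ↔ ∀ Y : Finset (Fin m), WCXp κ v Y → (X ∩ Y).Nonempty := by
  constructor
  · intro hX Y ⟨x, hx, hne⟩
    by_contra hemp
    apply hne
    apply hX
    intro i hi
    apply hx
    intro hiY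
    exact hemp ⟨i, Finset.mem_inter.mpr ⟨hi, hiY⟩⟩
  · intro h x hx
    by_contra hne
    obtain ⟨i, hi⟩ := h Xᶜ ⟨x, fun i hic => hx i (by simpa using hic), hne⟩
    simp [Finset.mem_inter] at hi


lemma wcxp_iff_hits_waxp {m : ℕ} (κ : (Fin m → Bool) → Bool) (v : Fin m → Bool)
    (Y : Finset (Fin m)) :
    WCXp κ v Y ↔ ∀ X : Finset (Fin m), WAXp κ v X → (Y ∩ X).Nonempty := by
  constructor
  · intro ⟨x, hx, hne⟩ X hX
    by_contra hemp
    apply hne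
    apply hX
    intro i hi
    apply hx
    intro hiY
    exact hemp ⟨i, Finset.mem_inter.mpr ⟨hiY, hi⟩⟩
  · intro h
    by_contra hnc
    obtain ⟨i, hi⟩ := h Yᶜ (by
      intro x hx
      by_contra hne
      exact hnc ⟨x, fun i hiY => hx i (by simpa using hiY), hne⟩)
    simp [Finset.mem_inter] at hi

lemma waxp_iff_hits_cxp {m : ℕ} (κ : (Fin m → Bool) → Bool) (v : Fin m → Bool)
    (X : Finset (Fin m)) :
    WAXp κ v X ↔ ∀ Y : Finset (Fin m), CXp κ v Y → (X ∩ Y).Nonempty := by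
  rw [waxp_iff_hits_wcxp]
  constructor
  · intro h Y hY; exact h Y hY.1
  · intro h Y hY
    obtain ⟨T, hTY, hT, hmin⟩ := exists_min_subset (WCXp κ v) Y hY
    obtain ⟨i, hi⟩ := h T ⟨hT, hmin⟩
    rw [Finset.mem_inter] at hi
    exact ⟨i, Finset.mem_inter.mpr ⟨hi.1, hTY hi.2⟩⟩

lemma wcxp_iff_hits_axp {m : ℕ} (κ : (Fin m → Bool) → Bool) (v : Fin m → Bool)
    (Y : Finset (Fin m)) :
    WCXp κ v Y ↔ ∀ X : Finset (Fin m), AXp κ v X → (Y ∩ X).Nonempty := by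
  rw [wcxp_iff_hits_waxp]
  constructor
  · intro h X hX; exact h X hX.1
  · intro h X hX
    obtain ⟨T, hTX, hT, hmin⟩ := exists_min_subset (WAXp κ v) X hX
    obtain ⟨i, hi⟩ := h T ⟨hT, hmin⟩
    rw [Finset.mem_inter] at hi
    exact ⟨i, Finset.mem_inter.mpr ⟨hi.1, hTX hi.2⟩⟩

theorem stmt6 {m : ℕ} (hm : 1 ≤ m) (κ : (Fin m → Bool) → Bool) (v : Fin m → Bool) :
    (∀ X : Finset (Fin m), AXp κ v X ↔
      ((∀ Y : Finset (Fin m), CXp κ v Y → (X ∩ Y).Nonempty) ∧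
       ∀ X' ⊂ X, ¬ (∀ Y : Finset (Fin m), CXp κ v Y → (X' ∩ Y).Nonempty))) ∧
    (∀ Y : Finset (Fin m), CXp κ v Y ↔
      ((∀ X : Finset (Fin m), AXp κ v X → (Y ∩ X).Nonempty) ∧
       ∀ Y' ⊂ Y, ¬ (∀ X : Finset (Fin m), AXp κ v X → (Y' ∩ X).Nonempty))) := by
  constructor
  · intro X
    unfold AXp
    constructor
    · intro ⟨h1, h2⟩
      exact ⟨(waxp_iff_hits_cxp κ v X).mp h1,
        fun X' hX' hc => h2 X' hX' ((waxp_iff_hits_cxp κ v X').mpr hc)⟩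
    · intro ⟨h1, h2⟩
      exact ⟨(waxp_iff_hits_cxp κ v X).mpr h1,
        fun X' hX' hc => h2 X' hX' ((waxp_iff_hits_cxp κ v X').mp hc)⟩
  · intro Y
    unfold CXp
    constructor
    · intro ⟨h1, h2⟩
      exact ⟨(wcxp_iff_hits_axp κ v Y).mp h1,
        fun Y' hY' hc => h2 Y' hY' ((wcxp_iff_hits_axp κ v Y').mpr hc)⟩
    · intro ⟨h1, h2⟩
      exact ⟨(wcxp_iff_hits_axp κ v Y).mpr h1,
        fun Y' hY' hc => h2 Y' hY' ((wcxp_iff_hits_axp κ v Y').mp hc)⟩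
end

section
/- Let m = 3, κ(x_1,x_2,x_3) = (x_1 ∧ x_2) ∨ (¬x_1 ∧ x_3), and v = (1,0,1), so c = κ(v) = 0. Then the Shapley value of feature 3 satisfies Sv(3) = 1/8; in particular Sv(3) ≠ 0 even though feature 3 belongs to no AXp (issue I1: an irrelevant feature receives nonzero Shapley importance). -/
/-- The classifier κ(x₁,x₂,x₃) = (x₁ ∧ x₂) ∨ (¬x₁ ∧ x₃) (features are 0-indexed). -/
def kappa3 : (Fin 3 → Bool) → Bool := fun x => (x 0 && x 1) || (!(x 0) && x 2)

/-- The point v = (1,0,1). -/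
def v101 : Fin 3 → Bool := ![true, false, true]


lemma phi_eq {m : ℕ} (κ : (Fin m → Bool) → Bool) (v : Fin m → Bool) (S : Finset (Fin m)) :
    phi κ v S = ((Finset.univ.filter
        (fun x : Fin m → Bool => (∀ i ∈ S, x i = v i) ∧ κ x = true)).card : ℚ)
      * (1 / 2 ^ (m - S.card)) := by
  unfold phi
  rw [Finset.sum_boole, Finset.filter_filter]
  ring

theorem stmt11 :
    kappa3 v101 = false ∧
    Sv kappa3 v101 2 = 1 / 8 ∧
    Sv kappa3 v101 2 ≠ 0 ∧
    ¬ (∃ S, AXp kappa3 v101 S ∧ (2 : Fin 3) ∈ S) := by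
  have key : ∀ (S : Finset (Fin 3)) (n : ℕ),
      (Finset.univ.filter
        (fun x : Fin 3 → Bool => (∀ i ∈ S, x i = v101 i) ∧ kappa3 x = true)).card = n →
      phi kappa3 v101 S = (n : ℚ) * (1 / 2 ^ (3 - S.card)) := by
    intro S n h
    rw [phi_eq, h]
  have h0 : phi kappa3 v101 ∅ = 1/2 := by rw [key ∅ 4 (by decide)]; norm_num
  have h1 : phi kappa3 v101 {0} = 1/2 := by rw [key {0} 2 (by decide)]; norm_num
  have h2 : phi kappa3 v101 {1} = 1/4 := by rw [key {1} 1 (by decide)]; norm_num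
  have h3 : phi kappa3 v101 {0,1} = 0 := by rw [key {0,1} 0 (by decide)]; norm_num
  have h4 : phi kappa3 v101 (insert 2 ∅) = 3/4 := by
    rw [key _ 3 (by decide), show (insert (2:Fin 3) (∅:Finset (Fin 3))).card = 1 from by decide]; norm_num
  have h5 : phi kappa3 v101 (insert 2 {0}) = 1/2 := by
    rw [key _ 1 (by decide), show (insert (2:Fin 3) ({0}:Finset (Fin 3))).card = 2 from by decide]; norm_num
  have h6 : phi kappa3 v101 (insert 2 {1}) = 1/2 := by
    rw [key _ 1 (by decide), show (insert (2:Fin 3) ({1}:Finset (Fin 3))).card = 2 from by decide]; norm_num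
  have h7 : phi kappa3 v101 (insert 2 {0,1}) = 0 := by
    rw [key _ 0 (by decide), show (insert (2:Fin 3) ({0,1}:Finset (Fin 3))).card = 3 from by decide]; norm_num
  have hSv : Sv kappa3 v101 2 = 1/8 := by
    rw [Sv, show (Finset.univ.erase (2:Fin 3)).powerset
        = ({∅, {0}, {1}, {0,1}} : Finset (Finset (Fin 3))) from by decide,
      Finset.sum_insert (by decide), Finset.sum_insert (by decide),
      Finset.sum_insert (by decide), Finset.sum_singleton]
    rw [h0, h1, h2, h3, h4, h5, h6, h7]
    norm_num [show (∅:Finset (Fin 3)).card = 0 from rfl,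
      show ({0}:Finset (Fin 3)).card = 1 from by decide,
      show ({1}:Finset (Fin 3)).card = 1 from by decide,
      show ({0,1}:Finset (Fin 3)).card = 2 from by decide, Nat.factorial]
  refine ⟨by decide, hSv, by rw [hSv]; norm_num, ?_⟩
  rintro ⟨S, ⟨hW, hmin⟩, hS⟩
  revert hW hmin hS
  revert S
  simp only [WAXp, upsilon, Set.mem_setOf_eq]
  decide
end

section
/- Let m = 3, κ(x_1,x_2,x_3) = (x_1 ∧ x_2) ∨ (¬x_1 ∧ x_3), and v = (1,1,1), so c = κ(v) = 1. Then the AXps for this instance are exactly {1,2} and {2,3}, so all three features are relevant, yet the Shapley value of feature 1 satisfies Sv(1) = 0 (issue I3: a relevant feature receives zero Shapley importance). -/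
/-- The point v = (1,1,1). -/
def v111 : Fin 3 → Bool := ![true, true, true]


instance decWAXp {m : ℕ} (κ : (Fin m → Bool) → Bool) (v : Fin m → Bool) (S : Finset (Fin m)) :
    Decidable (WAXp κ v S) :=
  decidable_of_iff (∀ x : Fin m → Bool, (∀ i ∈ S, x i = v i) → κ x = κ v) Iff.rfl

instance decAXp {m : ℕ} (κ : (Fin m → Bool) → Bool) (v : Fin m → Bool) (S : Finset (Fin m)) :
    Decidable (AXp κ v S) := by unfold AXp; infer_instance

instance decRelevant {m : ℕ} (κ : (Fin m → Bool) → Bool) (v : Fin m → Bool) (i : Fin m) :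
    Decidable (Relevant κ v i) := by unfold Relevant; infer_instance

def cnt {m : ℕ} (κ : (Fin m → Bool) → Bool) (v : Fin m → Bool) (S : Finset (Fin m)) : ℕ :=
  (Finset.univ.filter fun x : Fin m → Bool => (∀ i ∈ S, x i = v i) ∧ κ x = true).card

lemma phi_card {m : ℕ} (κ : (Fin m → Bool) → Bool) (v : Fin m → Bool) (S : Finset (Fin m)) :
    phi κ v S = (cnt κ v S : ℚ) / 2 ^ (m - S.card) := by
  unfold phi cnt
  rw [Finset.sum_boole, Finset.filter_filter]
  ring

theorem stmt12 :
    kappa3 v111 = true ∧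
    (∀ S : Finset (Fin 3), AXp kappa3 v111 S ↔ (S = {0, 1} ∨ S = {1, 2})) ∧
    (∀ i : Fin 3, Relevant kappa3 v111 i) ∧
    Sv kappa3 v111 0 = 0 := by
  refine ⟨by decide, by decide, by decide, ?_⟩
  have hpow : (Finset.univ.erase (0 : Fin 3)).powerset =
      {∅, {1}, {2}, {1, 2}} := by decide
  rw [Sv, hpow]
  rw [Finset.sum_insert (by decide), Finset.sum_insert (by decide),
    Finset.sum_insert (by decide), Finset.sum_singleton]
  have h1 : phi kappa3 v111 (insert 0 ∅) = 1/2 := by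
    rw [phi_card, show cnt kappa3 v111 (insert 0 ∅) = 2 from by decide]; norm_num
  have h2 : phi kappa3 v111 (∅ : Finset (Fin 3)) = 1/2 := by
    rw [phi_card, show cnt kappa3 v111 (∅ : Finset (Fin 3)) = 4 from by decide]; norm_num
  have h3 : phi kappa3 v111 (insert 0 {1}) = 1 := by
    rw [phi_card, show cnt kappa3 v111 (insert 0 {1}) = 2 from by decide,
      show (insert 0 ({1} : Finset (Fin 3))).card = 2 from by decide]; norm_num
  have h4 : phi kappa3 v111 ({1} : Finset (Fin 3)) = 3/4 := by
    rw [phi_card, show cnt kappa3 v111 ({1} : Finset (Fin 3)) = 3 from by decide]; norm_num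
  have h5 : phi kappa3 v111 (insert 0 {2}) = 1/2 := by
    rw [phi_card, show cnt kappa3 v111 (insert 0 {2}) = 1 from by decide,
      show (insert 0 ({2} : Finset (Fin 3))).card = 2 from by decide]; norm_num
  have h6 : phi kappa3 v111 ({2} : Finset (Fin 3)) = 3/4 := by
    rw [phi_card, show cnt kappa3 v111 ({2} : Finset (Fin 3)) = 3 from by decide]; norm_num
  have h7 : phi kappa3 v111 (insert 0 {1, 2}) = 1 := by
    rw [phi_card, show cnt kappa3 v111 (insert 0 {1, 2}) = 1 from by decide,
      show (insert 0 ({1, 2} : Finset (Fin 3))).card = 3 from by decide]; norm_num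
  have h8 : phi kappa3 v111 ({1, 2} : Finset (Fin 3)) = 1 := by
    rw [phi_card, show cnt kappa3 v111 ({1, 2} : Finset (Fin 3)) = 2 from by decide,
      show (({1, 2} : Finset (Fin 3))).card = 2 from by decide]; norm_num
  rw [h1, h2, h3, h4, h5, h6, h7, h8,
    show (({1} : Finset (Fin 3))).card = 1 from by decide,
    show (({2} : Finset (Fin 3))).card = 1 from by decide,
    show (({1, 2} : Finset (Fin 3))).card = 2 from by decide,
    show ((∅ : Finset (Fin 3))).card = 0 from by decide]
  norm_num [Nat.factorial]
end

section
/- There exist m ≥ 1, a classifier κ : {0,1}^m → {0,1}, a point v ∈ {0,1}^m, and a feature i ∈ F such that i is irrelevant for the instance (v, κ(v)) and yet Sv(i) ≠ 0 (existence of issue I1). -/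
lemma sum_pi2' (f : (Fin 2 → Bool) → ℚ) :
    ∑ x : Fin 2 → Bool, f x =
      f ![false,false] + f ![false,true] + f ![true,false] + f ![true,true] := by
  rw [← (finTwoArrowEquiv Bool).symm.sum_comp]
  simp [Fintype.sum_prod_type, finTwoArrowEquiv]
  ring

lemma phi_eval (S : Finset (Fin 2)) :
    phi (fun x => x 0 && x 1) ![false, true] S =
      (1 / 2 ^ (2 - S.card)) *
        ((if (∀ i ∈ S, ![(false:Bool),false] i = ![false,true] i) ∧ False then (1:ℚ) else 0) +
         (if (∀ i ∈ S, ![(false:Bool),true] i = ![false,true] i) ∧ False then (1:ℚ) else 0) +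
         (if (∀ i ∈ S, ![(true:Bool),false] i = ![false,true] i) ∧ False then (1:ℚ) else 0) +
         (if (∀ i ∈ S, ![(true:Bool),true] i = ![false,true] i) ∧ True then (1:ℚ) else 0)) := by
  rw [phi, Finset.sum_filter, sum_pi2']
  norm_num

theorem stmt15 :
    ∃ (m : ℕ) (κ : (Fin m → Bool) → Bool) (v : Fin m → Bool) (i : Fin m),
      1 ≤ m ∧ ¬ Relevant κ v i ∧ Sv κ v i ≠ 0 := by
  refine ⟨2, fun x => x 0 && x 1, ![false, true], 1, one_le_two, ?_, ?_⟩
  · rintro ⟨S, ⟨hW, hmin⟩, hiS⟩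
    have h0 : WAXp (fun x => x 0 && x 1) ![false, true] {0} := by
      intro x hx
      have hx0 : x 0 = false := hx 0 (by simp)
      simp [hx0]
    by_cases h0S : (0 : Fin 2) ∈ S
    · exact hmin {0} (Finset.ssubset_iff_of_subset (by simpa using h0S) |>.2
        ⟨1, hiS, by simp⟩) h0
    · have hxw := hW ![true, true] (by
        intro j hj
        fin_cases j
        · exact absurd hj h0S
        · rfl)
      simp at hxw
  · have hp : ((Finset.univ.erase (1 : Fin 2)).powerset : Finset (Finset (Fin 2)))
        = {∅, {0}} := by decide
    rw [Sv, hp, Finset.sum_pair (by decide)]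
    rw [phi_eval, phi_eval, phi_eval, phi_eval]
    norm_num [Finset.mem_insert]
end

section
/- There exist m ≥ 1, a classifier κ : {0,1}^m → {0,1}, a point v ∈ {0,1}^m, and a feature i ∈ F such that i is relevant for the instance (v, κ(v)) and yet Sv(i) = 0 (existence of issue I3). -/
theorem stmt16 :
    ∃ (m : ℕ) (κ : (Fin m → Bool) → Bool) (v : Fin m → Bool) (i : Fin m),
      1 ≤ m ∧ Relevant κ v i ∧ Sv κ v i = 0 := by
  refine ⟨3, fun x => (decide (x 0 = false ∧ x 1 = true ∧ x 2 = true) ||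
      decide (x 0 = true ∧ x 1 = false ∧ x 2 = false)), fun _ => true, 1, by norm_num, ?_, ?_⟩
  · refine ⟨{0, 1}, ⟨?_, ?_⟩, by decide⟩
    · intro x hx
      revert hx
      show (∀ i ∈ ({0, 1} : Finset (Fin 3)), x i = true) → _
      revert x
      decide
    · intro T hT h
      revert hT
      have h' : ∀ x : Fin 3 → Bool, (∀ i ∈ T, x i = true) → _ := h
      clear h
      revert h'
      revert T
      decide
  · have key : ∀ (κ : (Fin 3 → Bool) → Bool) (S : Finset (Fin 3)),
        phi κ (fun _ => true) S =
          (((Finset.univ.filter (fun x : Fin 3 → Bool => ∀ i ∈ S, x i = true)).filter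
              (fun x => κ x = true)).card : ℚ) / 2 ^ (3 - S.card) := by
      intro κ S
      rw [phi, Finset.sum_boole]
      ring
    rw [Sv,
      show (Finset.univ.erase (1 : Fin 3)).powerset = {∅, {0}, {2}, {0, 2}} from by decide]
    rw [Finset.sum_insert (by decide), Finset.sum_insert (by decide),
      Finset.sum_insert (by decide), Finset.sum_singleton]
    rw [key, key, key, key, key, key, key, key]
    norm_num [Finset.card_insert_of_notMem, Nat.factorial]
    norm_num [show (Finset.filter (fun x : Fin 3 → Bool => x 0 = false ∧ x 1 = true ∧ x 2 = true ∨ x 0 = true ∧ x 1 = false ∧ x 2 = false) (Finset.filter (fun x : Fin 3 → Bool => x 1 = true) Finset.univ)).card = 1 from by decide,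
      show (Finset.filter (fun x : Fin 3 → Bool => x 0 = false ∧ x 1 = true ∧ x 2 = true ∨ x 0 = true ∧ x 1 = false ∧ x 2 = false) Finset.univ).card = 2 from by decide,
      show (Finset.filter (fun x : Fin 3 → Bool => x 0 = false ∧ x 1 = true ∧ x 2 = true ∨ x 0 = true ∧ x 1 = false ∧ x 2 = false) (Finset.filter (fun x : Fin 3 → Bool => x 1 = true ∧ x 0 = true) Finset.univ)).card = 0 from by decide,
      show (Finset.filter (fun x : Fin 3 → Bool => x 0 = false ∧ x 1 = true ∧ x 2 = true ∨ x 0 = true ∧ x 1 = false ∧ x 2 = false) (Finset.filter (fun x : Fin 3 → Bool => x 0 = true) Finset.univ)).card = 1 from by decide,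
      show (Finset.filter (fun x : Fin 3 → Bool => x 0 = false ∧ x 1 = true ∧ x 2 = true ∨ x 0 = true ∧ x 1 = false ∧ x 2 = false) (Finset.filter (fun x : Fin 3 → Bool => x 1 = true ∧ x 2 = true) Finset.univ)).card = 1 from by decide,
      show (Finset.filter (fun x : Fin 3 → Bool => x 0 = false ∧ x 1 = true ∧ x 2 = true ∨ x 0 = true ∧ x 1 = false ∧ x 2 = false) (Finset.filter (fun x : Fin 3 → Bool => x 2 = true) Finset.univ)).card = 1 from by decide,
      show (Finset.filter (fun x : Fin 3 → Bool => x 0 = false ∧ x 1 = true ∧ x 2 = true ∨ x 0 = true ∧ x 1 = false ∧ x 2 = false) (Finset.filter (fun x : Fin 3 → Bool => x 1 = true ∧ x 0 = true ∧ x 2 = true) Finset.univ)).card = 0 from by decide,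
      show (Finset.filter (fun x : Fin 3 → Bool => x 0 = false ∧ x 1 = true ∧ x 2 = true ∨ x 0 = true ∧ x 1 = false ∧ x 2 = false) (Finset.filter (fun x : Fin 3 → Bool => x 0 = true ∧ x 2 = true) Finset.univ)).card = 0 from by decide,
      show ({1, 2} : Finset (Fin 3)).card = 2 from by decide,
      show ({1, 0, 2} : Finset (Fin 3)).card = 3 from by decide,
      show ({0, 2} : Finset (Fin 3)).card = 2 from by decide]
end

section
/- There exist m ≥ 1, a classifier κ : {0,1}^m → {0,1}, a point v ∈ {0,1}^m, and two features i_1, i_2 ∈ F such that i_1 is irrelevant for the instance (v, κ(v)), i_2 is relevant, and |Sv(i_1)| > |Sv(i_2)| (existence of issue I2: an irrelevant feature is ranked strictly more important than a relevant feature by Shapley values). -/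
instance decRel {m : ℕ} (κ : (Fin m → Bool) → Bool) (v : Fin m → Bool)
    (i : Fin m) : Decidable (Relevant κ v i) := by
  unfold Relevant; infer_instance

def myK : (Fin 4 → Bool) → Bool := fun x =>
  (!x 0 && ((!x 1 && x 3) || x 1)) ||
  (x 0 && !x 1 && ((!x 2 && !x 3) || (x 2 && x 3))) ||
  (x 0 && x 1 && (!x 2 || !x 3))

def myV : Fin 4 → Bool := fun i => i = 0

theorem stmt17 :
    ∃ (m : ℕ) (κ : (Fin m → Bool) → Bool) (v : Fin m → Bool) (i₁ i₂ : Fin m),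
      1 ≤ m ∧ ¬ Relevant κ v i₁ ∧ Relevant κ v i₂ ∧ |Sv κ v i₁| > |Sv κ v i₂| := by
  refine ⟨4, myK, myV, 1, 0, by norm_num, ?_, ?_, ?_⟩
  · decide
  · decide
  · with_unfolding_all decide
end
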